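/- Let d ≥ 2 be an integer and consider the polynomial with rational coefficients Q(t) := (2t/d) · ∏_{j=1}^{d−1} ((t + j − d/2)/j)², which equals R(t − d/2) where R(k) := ((2k+d)/d) · ∏_{j=1}^{d−1} ((k+j)/j)² is the multiplicity polynomial of the k-th Laplace eigenvalue on the complex projective space ℂP^d. Then Q has degree 2d − 1 and the coefficient of t^{2d−2} in Q is zero. -/

import Mathlib

open Polynomial

/-- Multiplicity polynomial of the `k`-th Laplace eigenvalue on the complex projective space
`ℂP^d`: `R(k) = ((2k+d)/d) ∏_{j=1}^{d-1} ((k+j)/j)²`. -/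
noncomputable def cpR (d : ℕ) : Polynomial ℚ :=
  C (((d : ℚ))⁻¹) * (2 * X + C ((d : ℚ))) *
    ∏ j ∈ Finset.Icc 1 (d - 1), (C ((j : ℚ)⁻¹) * (X + C ((j : ℚ)))) ^ 2

/-- The shifted multiplicity polynomial
`Q(t) = (2t/d) ∏_{j=1}^{d-1} ((t + j - d/2)/j)²` for `ℂP^d`. -/
noncomputable def cpQ (d : ℕ) : Polynomial ℚ :=
  C (2 * ((d : ℚ))⁻¹) * X *
    ∏ j ∈ Finset.Icc 1 (d - 1),
      (C ((j : ℚ)⁻¹) * (X + C ((j : ℚ) - (d : ℚ) / 2))) ^ 2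

lemma sum_Icc_cast_rat (n : ℕ) : ∑ j ∈ Finset.Icc 1 n, (j : ℚ) = n * (n + 1) / 2 := by
  induction n with
  | zero => simp
  | succ n ih =>
    rw [Finset.sum_Icc_succ_top (by omega), ih]
    push_cast
    ring

lemma cpQ_eq (d : ℕ) :
    cpQ d = C (2 * ((d : ℚ))⁻¹ * ∏ j ∈ Finset.Icc 1 (d - 1), ((j : ℚ)⁻¹) ^ 2) *
      (X * ∏ j ∈ Finset.Icc 1 (d - 1), (X + C ((j : ℚ) - (d : ℚ) / 2)) ^ 2) := by
  simp only [cpQ, mul_pow, Finset.prod_mul_distrib, map_mul, map_prod, map_pow]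
  ring

/-- For `d ≥ 2`, the polynomial `Q(t) = (2t/d) ∏_{j=1}^{d-1} ((t + j - d/2)/j)²` equals
`R(t - d/2)` where `R` is the multiplicity polynomial of `ℂP^d`; it has degree `2d - 1`
and its coefficient of `t^{2d-2}` is zero. -/
theorem cp_W_condition (d : ℕ) (hd : 2 ≤ d) :
    cpQ d = (cpR d).comp (X - C ((d : ℚ) / 2)) ∧
    (cpQ d).natDegree = 2 * d - 1 ∧
    (cpQ d).coeff (2 * d - 2) = 0 := by
  have hd0 : (d : ℚ) ≠ 0 := by positivity
  set s := Finset.Icc 1 (d - 1) with hs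
  -- part 1
  have hC2 : (C (2:ℚ) : ℚ[X]) = 2 := map_ofNat C 2
  have h1 : cpQ d = (cpR d).comp (X - C ((d : ℚ) / 2)) := by
    simp only [cpQ, cpR, mul_comp, prod_comp, pow_comp, add_comp, X_comp, C_comp, sub_comp,
      ofNat_comp, Nat.cast_ofNat]
    have h2 : (2 : ℚ[X]) * C ((d : ℚ) / 2) = C ((d : ℚ)) := by
      have h3 := C_mul (a := (2:ℚ)) (b := (d:ℚ)/2)
      rw [hC2] at h3
      rw [← h3]
      congr 1
      ring
    have hcc : (C (2 * ((d:ℚ))⁻¹) : ℚ[X]) = 2 * C ((d:ℚ))⁻¹ := by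
      rw [← hC2, ← C_mul]
    rw [Finset.prod_congr rfl (fun j _ => ?_)]
    · set P : ℚ[X] := ∏ x ∈ Finset.Icc 1 (d-1), (C ((x:ℚ))⁻¹ * (X - C ((d:ℚ)/2) + C ((x:ℚ)))) ^ 2
      linear_combination X * P * hcc + C ((d:ℚ))⁻¹ * P * h2
    · rw [map_sub]
      ring
  -- the monic part
  set M : ℚ[X] := ∏ j ∈ s, (X + C ((j : ℚ) - (d : ℚ) / 2)) ^ 2 with hM
  set c0 : ℚ := 2 * ((d : ℚ))⁻¹ * ∏ j ∈ s, ((j : ℚ)⁻¹) ^ 2 with hc0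
  have hmon : ∀ j ∈ s, ((X : ℚ[X]) + C ((j : ℚ) - (d : ℚ) / 2)) ^ 2 |>.Monic :=
    fun j _ => (monic_X_add_C _).pow 2
  have hMmonic : M.Monic := monic_prod_of_monic _ _ hmon
  have hcard : s.card = d - 1 := by rw [hs, Nat.card_Icc]; omega
  have hd1 : ((d - 1 : ℕ) : ℚ) = (d : ℚ) - 1 := by
    rw [Nat.cast_sub (by omega : 1 ≤ d)]; norm_num
  have hMdeg : M.natDegree = 2 * d - 2 := by
    rw [hM, Polynomial.natDegree_prod _ _ (fun j hj => (hmon j hj).ne_zero)]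
    have : ∀ j ∈ s, (((X : ℚ[X]) + C ((j : ℚ) - (d : ℚ) / 2)) ^ 2).natDegree = 2 := by
      intro j _
      rw [(monic_X_add_C _).natDegree_pow, natDegree_X_add_C, mul_one]
    rw [Finset.sum_congr rfl this, Finset.sum_const, hcard, smul_eq_mul]
    omega
  have hc0ne : c0 ≠ 0 := by
    rw [hc0]
    refine mul_ne_zero (by positivity) (Finset.prod_ne_zero_iff.2 fun j hj => ?_)
    have hj1 : 1 ≤ j := (Finset.mem_Icc.1 hj).1
    have : (j : ℚ) ≠ 0 := by positivity
    positivity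
  have hnext : M.nextCoeff = 0 := by
    rw [hM, Polynomial.Monic.nextCoeff_prod _ _ hmon]
    have : ∀ j ∈ s, (((X : ℚ[X]) + C ((j : ℚ) - (d : ℚ) / 2)) ^ 2).nextCoeff
        = 2 * ((j : ℚ) - (d : ℚ) / 2) := by
      intro j _
      rw [(monic_X_add_C _).nextCoeff_pow, nextCoeff_X_add_C]
      ring
    rw [Finset.sum_congr rfl this]
    have hsplit : ∑ x ∈ s, (2 * ((x:ℚ) - (d:ℚ)/2))
        = 2 * (∑ x ∈ s, (x:ℚ)) - (s.card : ℚ) * ((d:ℚ)/2) * 2 := by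
      simp only [mul_sub, Finset.sum_sub_distrib, ← Finset.mul_sum, Finset.sum_const,
        nsmul_eq_mul]
      ring
    rw [hsplit, hs, sum_Icc_cast_rat, ← hs, hcard, hd1]
    field_simp
    ring
  refine ⟨h1, ?_, ?_⟩
  · rw [cpQ_eq, ← hs, ← hM, ← hc0]
    rw [natDegree_C_mul hc0ne, natDegree_X_mul (hMmonic.ne_zero), hMdeg]
    omega
  · rw [cpQ_eq, ← hs, ← hM, ← hc0]
    have h22 : 2 * d - 2 = (2 * d - 3) + 1 := by omega
    rw [coeff_C_mul, h22, coeff_X_mul]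
    have hpos : 0 < M.natDegree := by rw [hMdeg]; omega
    have hcoe : M.nextCoeff = M.coeff (2 * d - 3) := by
      rw [nextCoeff_of_natDegree_pos hpos, hMdeg]
      congr 1
    rw [← hcoe, hnext, mul_zero]
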